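/- (Row version of Parrott's theorem.) Let H₁, H₂, K be complex Hilbert spaces and let C : H₁ → K and D : H₂ → K be bounded operators. Then the row operator [C, D] : H₁ ⊕ H₂ → K is a contraction if and only if C is a contraction and there exists a contraction Y : H₂ → K such that D = D_{C*}·Y, where D_{C*} = (I − CC*)^{1/2}. -/

import Mathlib

open ContinuousLinearMap

theorem douglas_aux {H₂ K : Type*}
    [NormedAddCommGroup H₂] [InnerProductSpace ℂ H₂] [CompleteSpace H₂]
    [NormedAddCommGroup K] [InnerProductSpace ℂ K] [CompleteSpace K]
    (D : H₂ →L[ℂ] K) (T : K →L[ℂ] K) (hT : IsSelfAdjoint T)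
    (hle : ∀ k, ‖ContinuousLinearMap.adjoint D k‖ ≤ ‖T k‖) :
    ∃ Y : H₂ →L[ℂ] K, ‖Y‖ ≤ 1 ∧ D = T ∘L Y := by
  classical
  set L : K →ₗ[ℂ] K := (T : K →ₗ[ℂ] K) with hL
  set Dst : K →ₗ[ℂ] H₂ :=
    ((ContinuousLinearMap.adjoint D : K →L[ℂ] H₂) : K →ₗ[ℂ] H₂) with hDst
  have hker : LinearMap.ker L ≤ LinearMap.ker Dst := by
    intro x hx
    have hx' : T x = 0 := hx
    have h2 : ‖ContinuousLinearMap.adjoint D x‖ ≤ ‖T x‖ := hle x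
    rw [hx', norm_zero] at h2
    exact norm_le_zero_iff.mp h2
  set R : Submodule ℂ K := LinearMap.range L with hR
  set ψ₀ : R →ₗ[ℂ] H₂ :=
    ((LinearMap.ker L).liftQ Dst hker).comp
      (L.quotKerEquivRange.symm.toLinearMap) with hψ₀
  have hψ₀_eq : ∀ (x : K) (h : L x ∈ R), ψ₀ ⟨L x, h⟩ = Dst x := by
    intro x h
    have h1 : L.quotKerEquivRange.symm ⟨L x, h⟩
        = (LinearMap.ker L).mkQ x := L.quotKerEquivRange_symm_apply_image x h
    simp only [hψ₀, LinearMap.comp_apply, LinearEquiv.coe_coe]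
    rw [h1]
    simp [Submodule.mkQ_apply]
  have hψ₀_norm : ∀ y : R, ‖ψ₀ y‖ ≤ 1 * ‖y‖ := by
    rintro ⟨y, hy⟩
    obtain ⟨x, rfl⟩ := hy
    rw [hψ₀_eq x (LinearMap.mem_range_self L x)]
    rw [one_mul]; exact hle x
  set ψ : R →L[ℂ] H₂ := ψ₀.mkContinuous 1 hψ₀_norm with hψ
  -- inclusion of R into its topological closure
  set S : Submodule ℂ K := R.topologicalClosure with hS
  have hRS : R ≤ S := Submodule.le_topologicalClosure R
  set e₀ : R →ₗ[ℂ] S := Submodule.inclusion hRS with he₀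
  have he₀_norm : ∀ y : R, ‖e₀ y‖ = ‖y‖ := fun y => rfl
  set e : R →L[ℂ] S := e₀.mkContinuous 1 (fun y => by rw [he₀_norm]; simp) with he
  have h_isom : Isometry e := AddMonoidHomClass.isometry_of_norm e (fun y => rfl)
  have h_dense : DenseRange e := by
    rw [Metric.denseRange_iff]
    rintro ⟨y, hy⟩ ε hε
    have hy' : y ∈ closure (R : Set K) := hy
    obtain ⟨r, hr, hdr⟩ := Metric.mem_closure_iff.mp hy' ε hε
    exact ⟨⟨r, hr⟩, by rw [Subtype.dist_eq]; exact hdr⟩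
  set Z₀ : S →L[ℂ] H₂ := ψ.extend e with hZ₀
  have hZ₀_eq : ∀ y : R, Z₀ (e y) = ψ y := fun y =>
    ContinuousLinearMap.extend_eq ψ h_dense h_isom.isUniformInducing y
  have hZ₀_norm : ∀ y : S, ‖Z₀ y‖ ≤ ‖y‖ := by
    intro y
    refine h_dense.induction_on y ?_ ?_
    · exact isClosed_le (continuous_norm.comp Z₀.continuous) continuous_norm
    · intro x
      rw [hZ₀_eq x, h_isom.norm_map_of_map_zero (by simp)]
      have h := hψ₀_norm x; rw [one_mul] at h; exact h
  have : CompleteSpace S := (Submodule.isClosed_topologicalClosure R).completeSpace_coe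
  set Z : K →L[ℂ] H₂ := Z₀ ∘L (Submodule.orthogonalProjectionOnto S : K →L[ℂ] S) with hZ
  have hZ_eq : ∀ k : K, Z (T k) = ContinuousLinearMap.adjoint D k := by
    intro k
    have hm : T k ∈ S := hRS (LinearMap.mem_range_self L k)
    have hproj : Submodule.orthogonalProjectionOnto S (T k) = ⟨T k, hm⟩ :=
      Submodule.orthogonalProjectionOnto_mem_subspace_eq_self (⟨T k, hm⟩ : S)
    have heq : (⟨T k, hm⟩ : S) = e ⟨T k, LinearMap.mem_range_self L k⟩ := rfl
    rw [hZ, ContinuousLinearMap.comp_apply, hproj, heq, hZ₀_eq]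
    exact hψ₀_eq k (LinearMap.mem_range_self L k)
  have hZ_norm : ‖Z‖ ≤ 1 := by
    refine ContinuousLinearMap.opNorm_le_bound Z zero_le_one (fun x => ?_)
    rw [one_mul]
    calc ‖Z x‖ = ‖Z₀ ((Submodule.orthogonalProjectionOnto S) x)‖ := rfl
      _ ≤ ‖(Submodule.orthogonalProjectionOnto S) x‖ := hZ₀_norm _
      _ ≤ ‖(Submodule.orthogonalProjectionOnto S : K →L[ℂ] S)‖ * ‖x‖ :=
          (Submodule.orthogonalProjectionOnto S : K →L[ℂ] S).le_opNorm x
      _ ≤ 1 * ‖x‖ :=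
          mul_le_mul_of_nonneg_right (Submodule.orthogonalProjectionOnto_norm_le S) (norm_nonneg x)
      _ = ‖x‖ := one_mul _
  refine ⟨ContinuousLinearMap.adjoint Z, ?_, ?_⟩
  · calc ‖ContinuousLinearMap.adjoint Z‖ = ‖Z‖ := ContinuousLinearMap.adjoint.norm_map Z
      _ ≤ 1 := hZ_norm
  · have hadj : ContinuousLinearMap.adjoint D = Z ∘L T := by
      ext k; exact (hZ_eq k).symm
    calc D = ContinuousLinearMap.adjoint (ContinuousLinearMap.adjoint D) :=
          (ContinuousLinearMap.adjoint_adjoint D).symm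
      _ = ContinuousLinearMap.adjoint (Z ∘L T) := by rw [hadj]
      _ = ContinuousLinearMap.adjoint T ∘L ContinuousLinearMap.adjoint Z := by
          rw [ContinuousLinearMap.adjoint_comp]
      _ = T ∘L ContinuousLinearMap.adjoint Z := by rw [hT.adjoint_eq]

/-- The row operator `[C, D] : H₁ ⊕ H₂ → K`, where the direct sum carries the `ℓ²` norm. -/
noncomputable def rowOp {H₁ H₂ K : Type*}
    [NormedAddCommGroup H₁] [InnerProductSpace ℂ H₁]
    [NormedAddCommGroup H₂] [InnerProductSpace ℂ H₂]
    [NormedAddCommGroup K] [InnerProductSpace ℂ K]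
    (C : H₁ →L[ℂ] K) (D : H₂ →L[ℂ] K) : WithLp 2 (H₁ × H₂) →L[ℂ] K :=
  (C.coprod D) ∘L
    ((WithLp.prodContinuousLinearEquiv 2 ℂ H₁ H₂ : WithLp 2 (H₁ × H₂) →L[ℂ] H₁ × H₂))

set_option maxHeartbeats 1000000 in
theorem parrott_row
    {H₁ H₂ K : Type*}
    [NormedAddCommGroup H₁] [InnerProductSpace ℂ H₁] [CompleteSpace H₁]
    [NormedAddCommGroup H₂] [InnerProductSpace ℂ H₂] [CompleteSpace H₂]
    [NormedAddCommGroup K] [InnerProductSpace ℂ K] [CompleteSpace K]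
    (C : H₁ →L[ℂ] K) (D : H₂ →L[ℂ] K)
    -- `DCstar` is the defect operator `D_{C*} = (I - CC*)^{1/2}`, i.e. the unique positive
    -- semidefinite square root of `I - CC*`:
    (DCstar : K →L[ℂ] K) (hDCstar_pos : DCstar.IsPositive)
    (hDCstar_sq : DCstar ∘L DCstar = 1 - C ∘L (ContinuousLinearMap.adjoint C)) :
    ‖rowOp C D‖ ≤ 1 ↔
      (‖C‖ ≤ 1 ∧ ∃ Y : H₂ →L[ℂ] K, ‖Y‖ ≤ 1 ∧ D = DCstar ∘L Y) := by
  have hsa : IsSelfAdjoint DCstar := hDCstar_pos.isSelfAdjoint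
  set C' := ContinuousLinearMap.adjoint C with hC'
  set D' := ContinuousLinearMap.adjoint D with hD'
  -- key norm identity for the defect operator
  have key : ∀ k : K, ‖DCstar k‖ ^ 2 = ‖k‖ ^ 2 - ‖C' k‖ ^ 2 := by
    intro k
    have h1 : (inner ℂ (DCstar k) (DCstar k) : ℂ)
        = inner ℂ k k - inner ℂ (C' k) (C' k) := by
      calc (inner ℂ (DCstar k) (DCstar k) : ℂ)
          = inner ℂ k ((DCstar ∘L DCstar) k) := by
            have h0 := ContinuousLinearMap.adjoint_inner_left DCstar (DCstar k) k
            rw [hsa.adjoint_eq] at h0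
            exact h0
        _ = inner ℂ k k - inner ℂ k (C (C' k)) := by
            rw [hDCstar_sq]; simp [inner_sub_right]
        _ = inner ℂ k k - inner ℂ (C' k) (C' k) := by
            rw [ContinuousLinearMap.adjoint_inner_left]
    simp only [inner_self_eq_norm_sq_to_K] at h1
    exact_mod_cast h1
  -- the adjoint of the row operator is the column operator
  set colOp : K →L[ℂ] WithLp 2 (H₁ × H₂) :=
    (((WithLp.prodContinuousLinearEquiv 2 ℂ H₁ H₂).symm :
        H₁ × H₂ →L[ℂ] WithLp 2 (H₁ × H₂))) ∘L (C'.prod D') with hcolOp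
  have hadj : colOp = ContinuousLinearMap.adjoint (rowOp C D) := by
    rw [ContinuousLinearMap.eq_adjoint_iff]
    intro x y
    have hrow : rowOp C D y = C y.ofLp.1 + D y.ofLp.2 := rfl
    have hfst : (colOp x).ofLp.1 = C' x := rfl
    have hsnd : (colOp x).ofLp.2 = D' x := rfl
    rw [WithLp.prod_inner_apply, hfst, hsnd, hrow, inner_add_right,
      ContinuousLinearMap.adjoint_inner_left, ContinuousLinearMap.adjoint_inner_left]
  have hcol_norm : ∀ k : K, ‖colOp k‖ ^ 2 = ‖C' k‖ ^ 2 + ‖D' k‖ ^ 2 := by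
    intro k
    rw [WithLp.prod_norm_sq_eq_of_L2]
    rfl
  have hnorm_eq : ‖rowOp C D‖ = ‖colOp‖ := by
    rw [hadj, ContinuousLinearMap.adjoint.norm_map]
  -- reduction to a pointwise inequality
  have hiff : ‖rowOp C D‖ ≤ 1 ↔ ∀ k : K, ‖C' k‖ ^ 2 + ‖D' k‖ ^ 2 ≤ ‖k‖ ^ 2 := by
    rw [hnorm_eq]
    constructor
    · intro h k
      have := (colOp.le_opNorm k).trans
        (mul_le_mul_of_nonneg_right h (norm_nonneg k))
      rw [one_mul] at this
      calc ‖C' k‖ ^ 2 + ‖D' k‖ ^ 2 = ‖colOp k‖ ^ 2 := (hcol_norm k).symm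
        _ ≤ ‖k‖ ^ 2 := pow_le_pow_left₀ (norm_nonneg _) this 2
    · intro h
      refine colOp.opNorm_le_bound zero_le_one (fun k => ?_)
      rw [one_mul]
      have h2 : ‖colOp k‖ ^ 2 ≤ ‖k‖ ^ 2 := by rw [hcol_norm]; exact h k
      nlinarith [norm_nonneg (colOp k), norm_nonneg k]
  rw [hiff]
  constructor
  · intro h
    have hC1 : ‖C‖ ≤ 1 := by
      rw [← ContinuousLinearMap.adjoint.norm_map C]
      refine ContinuousLinearMap.opNorm_le_bound _ zero_le_one (fun k => ?_)
      rw [one_mul]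
      have := h k
      nlinarith [sq_nonneg (‖D' k‖), norm_nonneg (C' k), norm_nonneg k]
    refine ⟨hC1, ?_⟩
    refine douglas_aux D DCstar hsa (fun k => ?_)
    have h1 := h k
    have h2 := key k
    nlinarith [norm_nonneg (D' k), norm_nonneg (DCstar k)]
  · rintro ⟨hC1, Y, hY, rfl⟩
    intro k
    have hD'k : ‖D' k‖ ≤ ‖DCstar k‖ := by
      have : D' = ContinuousLinearMap.adjoint Y ∘L DCstar := by
        rw [hD', ContinuousLinearMap.adjoint_comp, hsa.adjoint_eq]
      rw [this, ContinuousLinearMap.comp_apply]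
      calc ‖ContinuousLinearMap.adjoint Y (DCstar k)‖
          ≤ ‖ContinuousLinearMap.adjoint Y‖ * ‖DCstar k‖ := le_opNorm _ _
        _ ≤ 1 * ‖DCstar k‖ := by
            refine mul_le_mul_of_nonneg_right ?_ (norm_nonneg _)
            rw [ContinuousLinearMap.adjoint.norm_map]; exact hY
        _ = ‖DCstar k‖ := one_mul _
    have h2 := key k
    nlinarith [norm_nonneg (D' k), norm_nonneg (DCstar k)]
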